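/- Block Trivial Lemma: Let n, s be positive integers and let M be an n×n complex matrix; set E = Mᴴ * M. Let S ⊆ Fin n with |S| = s, and let ψ_0, …, ψ_{s−1} be pairwise orthogonal nonzero vectors in ℂⁿ each supported on S. Assume ⟨ψ_i, E ψ_j⟩ = 0 for all i ≠ j in {0,…,s−1}. If there exists an index u ∈ S such that E(u, v) = 0 for every v ∈ S with v ≠ u, and such that ψ_j(u) ≠ 0 for every j ∈ {0,…,s−1}, then the S×S block of E is proportional to the identity: there exists c ∈ ℂ with E(k,ℓ) = c whenever k = ℓ ∈ S and E(k,ℓ) = 0 whenever k, ℓ ∈ S with k ≠ ℓ. -/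

import Mathlib

open Matrix

/-- **Block Trivial Lemma.** Let `E = Mᴴ * M`, let `ψ_0, …, ψ_{s-1}` be pairwise
orthogonal nonzero vectors supported on a set `S` of cardinality `s`, with
`⟨ψ_i, E ψ_j⟩ = 0` for `i ≠ j`.  If some `u ∈ S` satisfies `E u v = 0` for every
other `v ∈ S` and `ψ_j u ≠ 0` for every `j`, then the `S × S` block of `E` is a
scalar multiple of the identity. -/
theorem block_trivial_lemma
    (n s : ℕ) (hn : 0 < n) (hs : 0 < s)
    (M : Matrix (Fin n) (Fin n) ℂ)
    (S : Finset (Fin n)) (hSne : S.Nonempty) (hScard : S.card = s)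
    (ψ : Fin s → Fin n → ℂ)
    (hψ0 : ∀ i, ψ i ≠ 0)
    (hψsupp : ∀ i, ∀ k, k ∉ S → ψ i k = 0)
    (hψorth : ∀ i j, i ≠ j → ∑ k, (starRingEnd ℂ) (ψ i k) * ψ j k = 0)
    (hzero : ∀ i j, i ≠ j →
      ∑ k, (starRingEnd ℂ) (ψ i k) * ((Mᴴ * M).mulVec (ψ j)) k = 0)
    (u : Fin n) (hu : u ∈ S)
    (hrow : ∀ v ∈ S, v ≠ u → (Mᴴ * M) u v = 0)
    (hψu : ∀ j, ψ j u ≠ 0) :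
    ∃ c : ℂ, (∀ k ∈ S, ∀ l ∈ S, (Mᴴ * M) k l = if k = l then c else 0) := by
  classical
  set E : Matrix (Fin n) (Fin n) ℂ := Mᴴ * M with hE
  haveI : Nonempty (Fin s) := ⟨⟨0, hs⟩⟩
  -- sums over `↥S` versus sums over `Fin n`
  have hsum : ∀ g : Fin n → ℂ, (∀ k ∉ S, g k = 0) →
      ∑ k : ↥S, g k.1 = ∑ k : Fin n, g k := by
    intro g hg
    rw [Finset.sum_coe_sort S g]
    exact Finset.sum_subset (Finset.subset_univ S) (fun k _ hk => hg k hk)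
  -- work in the Euclidean space on the coordinates of `S`
  have h_inner : ∀ x y : EuclideanSpace ℂ ↥S, (inner ℂ x y : ℂ)
      = ∑ k : ↥S, (starRingEnd ℂ) (x k) * y k := by
    intro x y
    simp [PiLp.inner_apply, RCLike.inner_apply, mul_comm]
  set f : Fin s → EuclideanSpace ℂ ↥S := fun j => WithLp.toLp 2 (fun k => ψ j k.1 : ↥S → ℂ) with hf
  have hfapp : ∀ j (k : ↥S), f j k = ψ j k.1 := fun j k => rfl
  have hfne : ∀ j, f j ≠ 0 := by
    intro j h
    exact hψu j (by simpa [hfapp] using congrArg (fun v : EuclideanSpace ℂ ↥S => v ⟨u, hu⟩) h)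
  have hforth : Pairwise fun i j => inner ℂ (f i) (f j) = (0 : ℂ) := by
    intro i j hij
    rw [h_inner]
    exact (hsum (fun k => (starRingEnd ℂ) (ψ i k) * ψ j k)
      (fun k hk => by simp [hψsupp i k hk])).trans (hψorth i j hij)
  have hli : LinearIndependent ℂ f :=
    linearIndependent_of_ne_zero_of_inner_eq_zero hfne hforth
  have hcard : Fintype.card (Fin s) = Module.finrank ℂ (EuclideanSpace ℂ ↥S) := by
    rw [finrank_euclideanSpace, Fintype.card_coe, Fintype.card_fin, hScard]
  have hspan : Submodule.span ℂ (Set.range f) = ⊤ :=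
    hli.span_eq_top_of_card_eq_finrank hcard
  -- any vector orthogonal to all `f i` is zero
  have horthzero : ∀ v : EuclideanSpace ℂ ↥S, (∀ i, inner ℂ (f i) v = (0 : ℂ)) → v = 0 := by
    intro v hv
    have hAll : ∀ x, x ∈ Submodule.span ℂ (Set.range f) →
        (inner ℂ x v : ℂ) = 0 := by
      intro x hx
      induction hx using Submodule.span_induction with
      | mem x hx => obtain ⟨i, rfl⟩ := hx; exact hv i
      | zero => exact inner_zero_left v
      | add x y hx hy ihx ihy => rw [inner_add_left, ihx, ihy, add_zero]
      | smul a x hx ihx => rw [inner_smul_left, ihx, mul_zero]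
    have hvv : (inner ℂ v v : ℂ) = 0 := hAll v (by rw [hspan]; trivial)
    exact inner_self_eq_zero.mp hvv
  -- the block matrix as a linear map on V
  set T : EuclideanSpace ℂ ↥S →ₗ[ℂ] EuclideanSpace ℂ ↥S :=
    { toFun := fun w => WithLp.toLp 2 (fun k => ∑ l : ↥S, E k.1 l.1 * w l : ↥S → ℂ)
      map_add' := by
        intro x y
        ext k
        show ∑ l : ↥S, E k.1 l.1 * (x l + y l) = _
        simp [mul_add, Finset.sum_add_distrib]
      map_smul' := by
        intro a x
        ext k
        show ∑ l : ↥S, E k.1 l.1 * (a * x l) = a * ∑ l : ↥S, E k.1 l.1 * x l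
        rw [Finset.mul_sum]
        exact Finset.sum_congr rfl fun l _ => by ring } with hT
  have hTapp : ∀ (w : EuclideanSpace ℂ ↥S) (k : ↥S), T w k = ∑ l : ↥S, E k.1 l.1 * w l :=
    fun w k => rfl
  set c : ℂ := E u u with hc
  -- T acts on the ψ's (restricted to S) as scalar c
  have hkey : ∀ j, T (f j) = c • f j := by
    intro j
    -- T of f j agrees with E.mulVec of ψ j
    have hmv : ∀ k : ↥S, T (f j) k = E.mulVec (ψ j) k.1 := by
      intro k
      rw [hTapp]
      exact hsum (fun l => E k.1 l * ψ j l)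
        (fun l hl => by simp [hψsupp j l hl])
    -- inner products with f i for i ≠ j vanish
    have horth : ∀ i, i ≠ j → inner ℂ (f i) (T (f j)) = (0 : ℂ) := by
      intro i hij
      rw [h_inner]
      have h2 : ∑ k : ↥S, (starRingEnd ℂ) (f i k) * T (f j) k
          = ∑ k : ↥S, (starRingEnd ℂ) (ψ i k.1) * E.mulVec (ψ j) k.1 :=
        Finset.sum_congr rfl fun k _ => by rw [hmv k, hfapp]
      rw [h2]
      exact (hsum (fun k => (starRingEnd ℂ) (ψ i k) * E.mulVec (ψ j) k)
        (fun k hk => by simp [hψsupp i k hk])).trans (hzero i j hij)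
    set cj : ℂ := inner ℂ (f j) (T (f j)) / inner ℂ (f j) (f j) with hcj
    have hfjne : (inner ℂ (f j) (f j) : ℂ) ≠ 0 :=
      fun h => hfne j (inner_self_eq_zero.mp h)
    have hv0 : T (f j) - cj • f j = 0 := by
      apply horthzero
      intro i
      rw [inner_sub_right, inner_smul_right]
      by_cases hij : i = j
      · subst hij
        rw [hcj, div_mul_cancel₀ _ hfjne, sub_self]
      · rw [horth i hij, hforth hij, mul_zero, sub_zero]
    have heig : T (f j) = cj • f j := sub_eq_zero.mp hv0
    -- evaluate at u to show cj = c
    have hmvu : E.mulVec (ψ j) u = c * ψ j u := by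
      show (∑ v : Fin n, E u v * ψ j v) = c * ψ j u
      rw [Finset.sum_eq_single u
        (fun v _ hv => by
          by_cases hvS : v ∈ S
          · rw [hrow v hvS hv, zero_mul]
          · rw [hψsupp j v hvS, mul_zero])
        (fun h => absurd (Finset.mem_univ u) h)]
    have hcu : cj * ψ j u = c * ψ j u := by
      have h1 : T (f j) ⟨u, hu⟩ = (cj • f j) ⟨u, hu⟩ := by rw [heig]
      rw [hmv ⟨u, hu⟩, hmvu] at h1
      have h2 : (cj • f j) ⟨u, hu⟩ = cj * ψ j u := rfl
      rw [h2] at h1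
      exact h1.symm
    have hcjc : cj = c := mul_right_cancel₀ (hψu j) hcu
    rw [heig, hcjc]
  -- propagate to all vectors via spanning
  have hall : ∀ w : EuclideanSpace ℂ ↥S, T w = c • w := by
    have hAll : ∀ x, x ∈ Submodule.span ℂ (Set.range f) → T x = c • x := by
      intro x hx
      induction hx using Submodule.span_induction with
      | mem x hx => obtain ⟨i, rfl⟩ := hx; exact hkey i
      | zero => rw [map_zero, smul_zero]
      | add x y hx hy ihx ihy => rw [map_add, ihx, ihy, smul_add]
      | smul a x hx ihx => rw [_root_.map_smul, ihx, smul_comm]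
    exact fun w => hAll w (by rw [hspan]; trivial)
  refine ⟨c, ?_⟩
  intro k hk l hl
  have h : T (EuclideanSpace.single (⟨l, hl⟩ : ↥S) (1 : ℂ)) ⟨k, hk⟩
      = (c • EuclideanSpace.single (⟨l, hl⟩ : ↥S) (1 : ℂ)) ⟨k, hk⟩ := by rw [hall]
  have hlhs : T (EuclideanSpace.single (⟨l, hl⟩ : ↥S) (1 : ℂ)) ⟨k, hk⟩ = E k l := by
    rw [hTapp]
    rw [Finset.sum_eq_single (⟨l, hl⟩ : ↥S)
      (fun m _ hm => by rw [EuclideanSpace.single_apply]; simp [hm])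
      (fun h => absurd (Finset.mem_univ _) h)]
    rw [EuclideanSpace.single_apply]
    simp
  rw [hlhs] at h
  have hrhs : (c • EuclideanSpace.single (⟨l, hl⟩ : ↥S) (1 : ℂ)) ⟨k, hk⟩
      = if k = l then c else 0 := by
    rw [PiLp.smul_apply, EuclideanSpace.single_apply, smul_eq_mul]
    by_cases hkl : k = l
    · have : (⟨k, hk⟩ : ↥S) = ⟨l, hl⟩ := by simp [hkl]
      simp [this, hkl]
    · have : (⟨k, hk⟩ : ↥S) ≠ ⟨l, hl⟩ := fun hh => hkl (by injection hh)
      simp [this, hkl]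
  rw [h, hrhs]
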